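/- Let A ≤ B in K₀ be a primitive extension (A ≤ B, A ≠ B, and there is no A ⊊ B₀ ⊊ B with A ≤ B₀ ≤ B). Then either |B - A| = 1, or no point p ∈ B - A is incident with a line based in A. Moreover, in the first case δ(B) - δ(A) ≤ 1. -/

import Mathlib

open scoped Classical

/-- A simple matroid of rank ≤ 3 presented as a 3-hypergraph `(V, R)`:
`R` is irreflexive, symmetric, and satisfies the exchange axiom
(if `R a b c` and `R a b d` then `{a,b,c,d}` is an `R`-clique). -/
structure PlaneGeom (V : Type) where
  R : V → V → V → Prop
  irrefl : ∀ a b c, R a b c → a ≠ b ∧ b ≠ c ∧ a ≠ c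
  symm₁ : ∀ a b c, R a b c → R b a c
  symm₂ : ∀ a b c, R a b c → R a c b
  exchange : ∀ a b c d, R a b c → R a b d → c ≠ d → R a c d

/-- A line `ℓ` is based in `B` if it contains at least two points of `B`. -/
def BasedIn {V : Type} [DecidableEq V] (ℓ B : Finset V) : Prop := 2 ≤ (ℓ ∩ B).card

namespace PlaneGeom

variable {V : Type} [Fintype V] [DecidableEq V] (G : PlaneGeom V)

/-- A set of pairwise collinear points. -/
def IsClique (s : Finset V) : Prop :=
  ∀ a ∈ s, ∀ b ∈ s, ∀ c ∈ s, a ≠ b → b ≠ c → a ≠ c → G.R a b c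

/-- A (nontrivial) line of the submatroid induced on `X`: a maximal
`R`-clique in `X` of size at least 3. -/
def IsLine (X ℓ : Finset V) : Prop :=
  ℓ ⊆ X ∧ 3 ≤ ℓ.card ∧ G.IsClique ℓ ∧
    ∀ p ∈ X, p ∉ ℓ → ¬ G.IsClique (insert p ℓ)

/-- The set of nontrivial lines of the submatroid induced on `X`. -/
noncomputable def lines (X : Finset V) : Finset (Finset V) :=
  Finset.univ.filter (fun ℓ => G.IsLine X ℓ)

/-- The predimension function `δ(X) = |X| - Σ_{ℓ ∈ L(X)} (|ℓ| - 2)`. -/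
noncomputable def delta (X : Finset V) : ℤ :=
  (X.card : ℤ) - ∑ ℓ ∈ G.lines X, ((ℓ.card : ℤ) - 2)

/-- `A ≤ B` : `A` is a strong substructure of `B`. -/
def Strong (A B : Finset V) : Prop :=
  A ⊆ B ∧ ∀ X : Finset V, A ⊆ X → X ⊆ B → G.delta A ≤ G.delta X

/-- Membership in the class `K₀`: hereditarily nonnegative `δ`. -/
def InK0 (A : Finset V) : Prop := ∀ A' ⊆ A, 0 ≤ G.delta A'

/-- `B` is a primitive strong extension of `A`. -/
def Primitive (A B : Finset V) : Prop :=
  G.Strong A B ∧ A ≠ B ∧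
    ∀ B₀ : Finset V, A ⊆ B₀ → B₀ ⊆ B → G.Strong A B₀ → G.Strong B₀ B →
      B₀ = A ∨ B₀ = B

end PlaneGeom

namespace PlaneGeom
variable {V : Type} [Fintype V] [DecidableEq V] (G : PlaneGeom V)

set_option linter.unusedSectionVars false

lemma clique_mono {s t : Finset V} (hst : s ⊆ t) (ht : G.IsClique t) : G.IsClique s :=
  fun a ha b hb c hc => ht a (hst ha) b (hst hb) c (hst hc)

lemma clique_insert {s : Finset V} {a b q : V} (hs : G.IsClique s) (ha : a ∈ s) (hb : b ∈ s)
    (hab : a ≠ b) (hq : q ∉ s) (hR : G.R a b q) : G.IsClique (insert q s) := by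
  have step1 : ∀ x ∈ s, x ≠ a → G.R a x q := by
    intro x hx hxa
    by_cases hxb : x = b
    · subst hxb; exact hR
    · have h1 : G.R a b x := hs a ha b hb x hx hab (fun h => hxb h.symm) (Ne.symm hxa)
      have hqx : q ≠ x := by rintro rfl; exact hq hx
      exact G.symm₂ _ _ _ (G.exchange a b q x hR h1 hqx)
  have step2 : ∀ x ∈ s, ∀ y ∈ s, x ≠ y → G.R x y q := by
    intro x hx y hy hxy
    by_cases hxa : x = a
    · subst hxa; exact step1 y hy (Ne.symm hxy)
    · by_cases hya : y = a
      · subst hya; exact G.symm₁ _ _ _ (step1 x hx hxa)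
      · have h1 : G.R x a q := G.symm₁ _ _ _ (step1 x hx hxa)
        have h2 : G.R x a y := hs x hx a ha y hy hxa (Ne.symm hya) hxy
        have hqy : q ≠ y := by rintro rfl; exact hq hy
        exact G.symm₂ _ _ _ (G.exchange x a q y h1 h2 hqy)
  intro u hu v hv w hw huv hvw huw
  rcases Finset.mem_insert.mp hu with rfl | hu2
  · have hv2 : v ∈ s := (Finset.mem_insert.mp hv).resolve_left (fun h => huv h.symm)
    have hw2 : w ∈ s := (Finset.mem_insert.mp hw).resolve_left (fun h => huw h.symm)
    exact G.symm₁ _ _ _ (G.symm₂ _ _ _ (step2 v hv2 w hw2 hvw))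
  · rcases Finset.mem_insert.mp hv with rfl | hv2
    · have hw2 : w ∈ s := (Finset.mem_insert.mp hw).resolve_left (fun h => hvw h.symm)
      exact G.symm₂ _ _ _ (step2 u hu2 w hw2 huw)
    · rcases Finset.mem_insert.mp hw with rfl | hw2
      · exact step2 u hu2 v hv2 huv
      · exact hs u hu2 v hv2 w hw2 huv hvw huw

lemma mem_lines {X ℓ : Finset V} : ℓ ∈ G.lines X ↔ G.IsLine X ℓ := by
  simp [PlaneGeom.lines]

/-- The key lemma: adjoining a point collinear with two points of `A`
does not increase `δ`. -/
lemma delta_insert_le {A : Finset V} {p a b : V} (hp : p ∉ A) (ha : a ∈ A) (hb : b ∈ A)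
    (hab : a ≠ b) (hR : G.R a b p) : G.delta (insert p A) ≤ G.delta A := by
  set A' := insert p A with hA'
  have hpa : p ≠ a := by rintro rfl; exact hp ha
  have hpb : p ≠ b := by rintro rfl; exact hp hb
  -- the map on lines
  set φ : Finset V → Finset V :=
    fun ℓ => if G.IsClique (insert p ℓ) then insert p ℓ else ℓ with hφ
  have hφ_sub : ∀ ℓ : Finset V, ℓ ⊆ φ ℓ := by
    intro ℓ; by_cases h : G.IsClique (insert p ℓ) <;>
      simp [hφ, h, Finset.subset_insert]
  have hpnotin : ∀ ℓ ∈ G.lines A, p ∉ ℓ := by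
    intro ℓ hℓ hpl
    exact hp (((G.mem_lines).mp hℓ).1 hpl)
  have himg : ∀ ℓ ∈ G.lines A, φ ℓ ∈ G.lines A' := by
    intro ℓ hℓ
    obtain ⟨hℓA, hℓ3, hℓcl, hℓmax⟩ := (G.mem_lines).mp hℓ
    have hpl : p ∉ ℓ := fun h => hp (hℓA h)
    by_cases h : G.IsClique (insert p ℓ)
    · rw [G.mem_lines]
      refine ⟨?_, ?_, ?_, ?_⟩
      · simp only [hφ, if_pos h]
        exact Finset.insert_subset_insert _ hℓA
      · simp only [hφ, if_pos h]
        rw [Finset.card_insert_of_notMem hpl]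
        omega
      · simpa [hφ, if_pos h] using h
      · simp only [hφ, if_pos h]
        intro q hq hql hcl
        have hqA : q ∈ A := by
          rcases Finset.mem_insert.mp hq with rfl | hqA
          · exact absurd (Finset.mem_insert_self q ℓ) hql
          · exact hqA
        have hqℓ : q ∉ ℓ := fun h => hql (Finset.mem_insert_of_mem h)
        exact hℓmax q hqA hqℓ (G.clique_mono (by
          intro x hx
          rcases Finset.mem_insert.mp hx with rfl | hx
          · exact Finset.mem_insert_self _ _
          · exact Finset.mem_insert_of_mem (Finset.mem_insert_of_mem hx)) hcl)
    · rw [G.mem_lines]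
      refine ⟨?_, ?_, ?_, ?_⟩
      · simp only [hφ, if_neg h]
        exact hℓA.trans (Finset.subset_insert _ _)
      · simpa [hφ, if_neg h] using hℓ3
      · simpa [hφ, if_neg h] using hℓcl
      · simp only [hφ, if_neg h]
        intro q hq hql hcl
        rcases Finset.mem_insert.mp hq with rfl | hqA
        · exact h hcl
        · exact hℓmax q hqA hql hcl
  have hinj : Set.InjOn φ (G.lines A : Set (Finset V)) := by
    intro ℓ₁ h1 ℓ₂ h2 heq
    have hp1 : p ∉ ℓ₁ := hpnotin ℓ₁ h1
    have hp2 : p ∉ ℓ₂ := hpnotin ℓ₂ h2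
    by_cases c1 : G.IsClique (insert p ℓ₁) <;> by_cases c2 : G.IsClique (insert p ℓ₂) <;>
      simp only [hφ, if_pos, if_neg, c1, c2, if_true, if_false] at heq
    · have := congrArg (fun s => Finset.erase s p) heq
      simpa [Finset.erase_insert_of_ne, Finset.erase_insert hp1,
        Finset.erase_insert hp2] using this
    · exact absurd (heq ▸ Finset.mem_insert_self p ℓ₁) hp2
    · exact absurd (heq ▸ Finset.mem_insert_self p ℓ₂ : p ∈ ℓ₁) hp1
    · exact heq
  -- the special line through a, b, p
  have habp_cl : G.IsClique ({a, b, p} : Finset V) := by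
    have h1 := hR
    have h2 := G.symm₁ _ _ _ h1
    have h3 := G.symm₂ _ _ _ h1
    have h4 := G.symm₁ _ _ _ h3
    have h5 := G.symm₂ _ _ _ h2
    have h6 := G.symm₁ _ _ _ h5
    intro x hx y hy z hz hxy hyz hxz
    simp only [Finset.mem_insert, Finset.mem_singleton] at hx hy hz
    rcases hx with rfl | rfl | rfl <;> rcases hy with rfl | rfl | rfl <;>
      rcases hz with rfl | rfl | rfl <;> first | assumption | simp_all
  have hsubA' : ({a, b, p} : Finset V) ⊆ A' := by
    intro x hx
    simp only [Finset.mem_insert, Finset.mem_singleton] at hx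
    rcases hx with rfl | rfl | rfl
    · exact Finset.mem_insert_of_mem ha
    · exact Finset.mem_insert_of_mem hb
    · exact Finset.mem_insert_self _ _
  obtain ⟨ℓs, hℓsC, hℓsmax⟩ : ∃ i ∈ (A'.powerset).filter
      (fun s => G.IsClique s ∧ ({a, b, p} : Finset V) ⊆ s), ∀ x ∈ (A'.powerset).filter
      (fun s => G.IsClique s ∧ ({a, b, p} : Finset V) ⊆ s), ¬ i < x :=
    (Finset.exists_maximal (s := (A'.powerset).filter
      (fun s => G.IsClique s ∧ ({a, b, p} : Finset V) ⊆ s))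
      ⟨{a, b, p}, by
        simp only [Finset.mem_filter, Finset.mem_powerset]
        exact ⟨hsubA', habp_cl, Finset.Subset.refl _⟩⟩).elim
      fun i hi => ⟨i, hi.prop, fun x hx hlt => hlt.not_ge (hi.le_of_ge hx hlt.le)⟩
  simp only [Finset.mem_filter, Finset.mem_powerset] at hℓsC
  obtain ⟨hℓsA', hℓscl, hℓsabp⟩ := hℓsC
  have hcard3 : 3 ≤ ℓs.card := by
    calc 3 = ({a, b, p} : Finset V).card := by
            rw [Finset.card_insert_of_notMem (by simp [hab, hpa.symm]),
              Finset.card_insert_of_notMem (by simp [hpb.symm])]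
            simp
      _ ≤ ℓs.card := Finset.card_le_card hℓsabp
  have hℓsline : ℓs ∈ G.lines A' := by
    rw [G.mem_lines]
    refine ⟨hℓsA', hcard3, hℓscl, ?_⟩
    intro q hq hql hcl
    refine hℓsmax (insert q ℓs) ?_ (Finset.ssubset_insert hql)
    simp only [Finset.mem_filter, Finset.mem_powerset]
    exact ⟨Finset.insert_subset hq hℓsA', hcl, hℓsabp.trans (Finset.subset_insert _ _)⟩
  have hpℓs : p ∈ ℓs := hℓsabp (by simp)
  -- sum comparison
  have hnonneg : ∀ ℓ ∈ G.lines A', (0 : ℤ) ≤ (ℓ.card : ℤ) - 2 := by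
    intro ℓ hℓ
    have := ((G.mem_lines).mp hℓ).2.1
    omega
  have himgsub : (G.lines A).image φ ⊆ G.lines A' := by
    intro ℓ' hℓ'
    obtain ⟨ℓ, hℓ, rfl⟩ := Finset.mem_image.mp hℓ'
    exact himg ℓ hℓ
  have hsum_img : ∑ ℓ ∈ (G.lines A).image φ, ((ℓ.card : ℤ) - 2)
      = ∑ ℓ ∈ G.lines A, (((φ ℓ).card : ℤ) - 2) :=
    Finset.sum_image (fun x hx y hy h => hinj hx hy h)
  have hterm_le : ∀ ℓ ∈ G.lines A, ((ℓ.card : ℤ) - 2) ≤ (((φ ℓ).card : ℤ) - 2) := by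
    intro ℓ hℓ
    have := Finset.card_le_card (hφ_sub ℓ)
    omega
  have key : ∑ ℓ ∈ G.lines A, ((ℓ.card : ℤ) - 2) + 1
      ≤ ∑ ℓ ∈ G.lines A', ((ℓ.card : ℤ) - 2) := by
    by_cases hmem : ℓs ∈ (G.lines A).image φ
    · obtain ⟨m, hm, hφm⟩ := Finset.mem_image.mp hmem
      have hpm : p ∉ m := hpnotin m hm
      have hφm' : φ m = insert p m := by
        by_cases h : G.IsClique (insert p m)
        · simp [hφ, h]
        · exfalso
          have : φ m = m := by simp [hφ, h]
          rw [this] at hφm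
          exact hpm (hφm ▸ hpℓs)
      have hstrict : ((m.card : ℤ) - 2) < (((φ m).card : ℤ) - 2) := by
        rw [hφm', Finset.card_insert_of_notMem hpm]
        push_cast
        omega
      have h1 : ∑ ℓ ∈ G.lines A, ((ℓ.card : ℤ) - 2)
          < ∑ ℓ ∈ G.lines A, (((φ ℓ).card : ℤ) - 2) :=
        Finset.sum_lt_sum hterm_le ⟨m, hm, hstrict⟩
      have h2 : ∑ ℓ ∈ (G.lines A).image φ, ((ℓ.card : ℤ) - 2)
          ≤ ∑ ℓ ∈ G.lines A', ((ℓ.card : ℤ) - 2) :=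
        Finset.sum_le_sum_of_subset_of_nonneg himgsub (fun i hi _ => hnonneg i hi)
      omega
    · have hins : insert ℓs ((G.lines A).image φ) ⊆ G.lines A' :=
        Finset.insert_subset hℓsline himgsub
      have h2 : ∑ ℓ ∈ insert ℓs ((G.lines A).image φ), ((ℓ.card : ℤ) - 2)
          ≤ ∑ ℓ ∈ G.lines A', ((ℓ.card : ℤ) - 2) :=
        Finset.sum_le_sum_of_subset_of_nonneg hins (fun i hi _ => hnonneg i hi)
      rw [Finset.sum_insert hmem] at h2
      have h3 : ∑ ℓ ∈ G.lines A, ((ℓ.card : ℤ) - 2)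
          ≤ ∑ ℓ ∈ (G.lines A).image φ, ((ℓ.card : ℤ) - 2) := by
        rw [hsum_img]; exact Finset.sum_le_sum hterm_le
      have h4 : (1 : ℤ) ≤ (ℓs.card : ℤ) - 2 := by omega
      omega
  -- conclude
  unfold PlaneGeom.delta
  have hcardA' : (A'.card : ℤ) = (A.card : ℤ) + 1 := by
    rw [hA', Finset.card_insert_of_notMem hp]; push_cast; ring
  rw [hcardA']
  omega

end PlaneGeom


/-- if `A ≤ B` is a primitive extension in `K₀`, then either
`|B - A| = 1` (in which case `δ(B) - δ(A) ≤ 1`), or no point of `B - A` is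
incident with a line based in `A`. -/
theorem stmt_10 {V : Type} [Fintype V] [DecidableEq V] (G : PlaneGeom V)
    (A B : Finset V) (hB : G.InK0 B) (hprim : G.Primitive A B) :
    ((B \ A).card = 1 ∧ G.delta B - G.delta A ≤ 1) ∨
      (∀ p ∈ B \ A, ∀ ℓ : Finset V, G.IsLine B ℓ → BasedIn ℓ A → p ∉ ℓ) := by
  by_cases h : ∀ p ∈ B \ A, ∀ ℓ : Finset V, G.IsLine B ℓ → BasedIn ℓ A → p ∉ ℓ
  · exact Or.inr h
  · left
    push_neg at h
    obtain ⟨p, hpBA, ℓ, hline, hbased, hpl⟩ := h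
    obtain ⟨hpB, hpA⟩ := Finset.mem_sdiff.mp hpBA
    obtain ⟨a, haI, b, hbI, hab⟩ := Finset.one_lt_card.mp hbased
    obtain ⟨haℓ, haA⟩ := Finset.mem_inter.mp haI
    obtain ⟨hbℓ, hbA⟩ := Finset.mem_inter.mp hbI
    have hap : a ≠ p := by rintro rfl; exact hpA haA
    have hbp : b ≠ p := by rintro rfl; exact hpA hbA
    have hRabp : G.R a b p := hline.2.2.1 a haℓ b hbℓ p hpl hab hbp hap
    have hdle : G.delta (insert p A) ≤ G.delta A :=
      G.delta_insert_le hpA haA hbA hab hRabp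
    obtain ⟨⟨hAB, hstr⟩, hne, hmin⟩ := hprim
    have hA'B : insert p A ⊆ B := Finset.insert_subset hpB hAB
    have hs1 : G.Strong A (insert p A) :=
      ⟨Finset.subset_insert _ _, fun X hAX hXA' => hstr X hAX (hXA'.trans hA'B)⟩
    have hs2 : G.Strong (insert p A) B :=
      ⟨hA'B, fun X hX hXB =>
        le_trans hdle (hstr X ((Finset.subset_insert _ _).trans hX) hXB)⟩
    rcases hmin (insert p A) (Finset.subset_insert _ _) hA'B hs1 hs2 with heq | heq
    · exact absurd (heq ▸ Finset.mem_insert_self p A) hpA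
    · have hBA : B \ A = {p} := by
        rw [← heq]
        ext x
        simp only [Finset.mem_sdiff, Finset.mem_insert, Finset.mem_singleton]
        constructor
        · rintro ⟨rfl | hx, hxA⟩
          · rfl
          · exact absurd hx hxA
        · rintro rfl
          exact ⟨Or.inl rfl, hpA⟩
      refine ⟨by rw [hBA]; simp, ?_⟩
      rw [← heq]
      omega
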